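/- Let U be a λH-term and let J = (Θ G), where Θ = (λx.λy.(y ((x x) y))) (λx.λy.(y ((x x) y))) is Turing's fixed point combinator and G = λx.λy.λz.(y (x z)). Then U is J-t-solvable if and only if U[J/H] (the λ-term obtained from U by substituting J for every occurrence of the constant H) is solvable. -/

import Mathlib

/-- λH-terms: untyped λ-terms in de Bruijn notation with a distinguished
constant `H`. -/
inductive LamH : Type
  | var : ℕ → LamH
  | H : LamH
  | lam : LamH → LamH
  | app : LamH → LamH → LamH

namespace LamH

/-- Lift (shift by one) the de Bruijn indices ≥ `d`. -/
def lift : LamH → ℕ → LamH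
  | var n, d => if n < d then var n else var (n + 1)
  | H, _ => H
  | lam u, d => lam (lift u (d + 1))
  | app u v, d => app (lift u d) (lift v d)

/-- Capture-avoiding substitution `t[s/k]`. -/
def subst : LamH → ℕ → LamH → LamH
  | var n, k, s => if n = k then s else if k < n then var (n - 1) else var n
  | H, _, _ => H
  | lam u, k, s => lam (subst u (k + 1) (lift s 0))
  | app u v, k, s => app (subst u k s) (subst v k s)

/-- Head reduction `→t` contracting the head β-redex:
`λx̄.((λx.U) V) V₁ ... Vₖ →t λx̄.(U[V/x]) V₁ ... Vₖ`. -/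
inductive Head : LamH → LamH → Prop
  | beta (u v : LamH) : Head (app (lam u) v) (subst u 0 v)
  | appL {u u' : LamH} (v : LamH) : Head u u' → (∀ w, u ≠ lam w) →
      Head (app u v) (app u' v)
  | abs {u u' : LamH} : Head u u' → Head (lam u) (lam u')

/-- `headH t = true` iff `t` is of the form `H U₁ U₂ ... Uₙ` with `n ≥ 0`. -/
def headH : LamH → Bool
  | H => true
  | app u _ => headH u
  | _ => false

/-- Remove the head occurrence of `H`: `dropH (H U₁ U₂ ... Uₙ) = U₁ U₂ ... Uₙ`
(for `n ≥ 1`). -/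
def dropH : LamH → LamH
  | app H v => v
  | app u v => app (dropH u) v
  | t => t

theorem dropH_app_size_lt : ∀ u v : LamH, headH u = true →
    sizeOf (dropH (app u v)) < sizeOf (app u v) := by
  intro u
  induction u with
  | var n => intro v h; simp [headH] at h
  | H => intro v _; simp [dropH]
  | lam u ih => intro v h; simp [headH] at h
  | app u1 u2 ih1 ih2 =>
    intro v h
    have h1 : headH u1 = true := by simpa [headH] using h
    have : dropH (app (app u1 u2) v) = app (dropH (app u1 u2)) v := by
      cases u1 <;> rfl
    rw [this]
    have := ih1 u2 h1
    simp only [app.sizeOf_spec] at *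
    omega

/-- The extraction map `E`: it erases `H` in head position of an application.
`E(x) = x`, `E(H) = H`, `E(λx.U) = λx.E(U)`,
`E(U V) = (E(U) E(V))` if `U` is not of the form `H U₁ ... Uₙ`, and
`E(H U₁ U₂ ... Uₙ) = E(U₁ U₂ ... Uₙ)`. -/
def E : LamH → LamH
  | var n => var n
  | H => H
  | lam u => lam (E u)
  | app u v =>
    if h : headH u = true then E (dropH (app u v)) else app (E u) (E v)
termination_by t => sizeOf t
decreasing_by
  all_goals first
    | exact dropH_app_size_lt u v (by assumption)
    | (simp; omega)
    | simp

end LamH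

namespace LamH

/-- Terms of the form `x V₁ ... Vₖ` for a variable `x`. -/
inductive VarApp : LamH → Prop
  | var (n : ℕ) : VarApp (var n)
  | app {u : LamH} (v : LamH) : VarApp u → VarApp (app u v)

/-- Head normal forms of λH-terms: `λx₁...λxₘ.H` or `λx₁...λxₘ.(x V₁ ... Vₖ)`. -/
inductive HnfH : LamH → Prop
  | H : HnfH H
  | base {t : LamH} : VarApp t → HnfH t
  | lam {t : LamH} : HnfH t → HnfH (lam t)

end LamH

namespace LamH

/-- The J-reduction: `λx₁...λxₘ.(H U₁ U₂ U₃ ... Uₙ) →J λx₁...λxₘ.(U₁ (H U₂) U₃ ... Uₙ)`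
for `n ≥ 2`, and `λx₁...λxₘ.(H U₁) →J λx₁...λxₘ.U₁`. -/
inductive Jred : LamH → LamH → Prop
  | one (v : LamH) : Jred (app H v) v
  | two (u v : LamH) : Jred (app (app H u) v) (app u (app H v))
  | appL {u u' : LamH} (v : LamH) : Jred u u' → (∀ w, u ≠ lam w) →
      (∀ w, u ≠ app H w) → Jred (app u v) (app u' v)
  | abs {u u' : LamH} : Jred u u' → Jred (lam u) (lam u')

end LamH

namespace LamH

/-- Substituting the λH-term `s` for every occurrence of the constant `H`. -/
def substH : LamH → LamH → LamH
  | var n, _ => var n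
  | H, s => s
  | lam u, s => lam (substH u s)
  | app u v, s => app (substH u s) (substH v s)

/-- Head normal forms of plain λ-terms: `λx₁...λxₘ.(x V₁ ... Vₖ)`. -/
inductive Hnf : LamH → Prop
  | base {t : LamH} : VarApp t → Hnf t
  | lam {t : LamH} : Hnf t → Hnf (lam t)

/-- A λ-term (without `H`) is solvable iff its head reduction sequence
terminates in a head normal form. -/
def Solvable (t : LamH) : Prop :=
  ∃ t', Relation.ReflTransGen Head t t' ∧ Hnf t'

end LamH

namespace LamH

/-- A λH-term is J-t-solvable iff some finite sequence of J-reductions and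
head reductions starting from it reaches a head normal form. -/
def JtSolvable (t : LamH) : Prop :=
  ∃ t', Relation.ReflTransGen (fun a b => Jred a b ∨ Head a b) t t' ∧ HnfH t'

/-- `δ = λx.λy.(y ((x x) y))`. -/
def deltaTerm : LamH :=
  lam (lam (app (var 0) (app (app (var 1) (var 1)) (var 0))))

/-- Turing's fixed point combinator `Θ = δ δ`. -/
def thetaTerm : LamH := app deltaTerm deltaTerm

/-- `G = λx.λy.λz.(y (x z))`. -/
def Gterm : LamH := lam (lam (lam (app (var 1) (app (var 2) (var 0)))))

/-- `J = (Θ G)`. -/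
def Jterm : LamH := app thetaTerm Gterm

deriving instance DecidableEq for LamH

/-! ### de Bruijn lemmas -/

theorem lift_lift : ∀ (t : LamH) (d e : ℕ), d ≤ e →
    lift (lift t d) (e+1) = lift (lift t e) d := by
  intro t
  induction t with
  | var n =>
    intro d e h
    simp only [lift]
    split_ifs <;> simp only [lift] <;> split_ifs <;>
      first | rfl | (exfalso; omega) | (exact congrArg LamH.var (by omega))
  | H => intros; rfl
  | lam u ih => intro d e h; simp only [lift]; rw [ih (d+1) (e+1) (by omega)]
  | app u v ihu ihv => intro d e h; simp only [lift]; rw [ihu _ _ h, ihv _ _ h]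

theorem subst_lift_cancel : ∀ (t : LamH) (d : ℕ) (s : LamH), subst (lift t d) d s = t := by
  intro t
  induction t with
  | var n =>
    intro d s
    simp only [lift]
    split_ifs <;> simp only [subst] <;> split_ifs <;>
      first | rfl | (exfalso; omega) | (exact congrArg LamH.var (by omega))
  | H => intros; rfl
  | lam u ih => intro d s; simp only [lift, subst]; rw [ih]
  | app u v ihu ihv => intro d s; simp only [lift, subst]; rw [ihu, ihv]

theorem subst_lift : ∀ (t s : LamH) (k d : ℕ), d ≤ k →
    subst (lift t d) (k+1) (lift s d) = lift (subst t k s) d := by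
  intro t
  induction t with
  | var n =>
    intro s k d h
    simp only [lift, subst]
    split_ifs <;> simp only [lift, subst] <;> split_ifs <;>
      first | rfl | (exfalso; omega) | (exact congrArg LamH.var (by omega))
  | H => intros; rfl
  | lam u ih =>
    intro s k d h
    simp only [lift, subst]
    rw [← lift_lift s 0 d (by omega), ih (lift s 0) (k+1) (d+1) (by omega)]
  | app u v ihu ihv =>
    intro s k d h
    simp only [lift, subst]; rw [ihu _ _ _ h, ihv _ _ _ h]

theorem lift_subst : ∀ (t v : LamH) (k d : ℕ), k ≤ d →
    lift (subst t k v) d = subst (lift t (d+1)) k (lift v d) := by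
  intro t
  induction t with
  | var n =>
    intro v k d h
    simp only [lift, subst]
    split_ifs <;> simp only [lift, subst] <;> split_ifs <;>
      first | rfl | (exfalso; omega) | (exact congrArg LamH.var (by omega))
  | H => intros; rfl
  | lam u ih =>
    intro v k d h
    simp only [lift, subst]
    rw [ih (lift v 0) (k+1) (d+1) (by omega), lift_lift v 0 d (by omega)]
  | app u v ihu ihv =>
    intro w k d h
    simp only [lift, subst]; rw [ihu _ _ _ h, ihv _ _ _ h]

theorem subst_subst : ∀ (t u v : LamH) (j k : ℕ), j ≤ k →
    subst (subst t j u) k v = subst (subst t (k+1) (lift v j)) j (subst u k v) := by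
  intro t
  induction t with
  | var n =>
    intro u v j k h
    simp only [subst]
    split_ifs <;> (try simp only [subst]) <;> (try split_ifs) <;>
      first
        | rfl
        | (exfalso; omega)
        | (exact congrArg LamH.var (by omega))
        | (exact (subst_lift_cancel v j _).symm)
  | H => intros; rfl
  | lam t ih =>
    intro u v j k h
    simp only [subst]
    rw [ih (lift u 0) (lift v 0) (j+1) (k+1) (by omega),
        lift_lift v 0 j (by omega),
        subst_lift u v k 0 (by omega)]
  | app a b iha ihb =>
    intro u v j k h
    simp only [subst]; rw [iha _ _ _ _ h, ihb _ _ _ _ h]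

/-! ### Closedness -/

def ClosedAbove : LamH → ℕ → Prop
  | var n, k => n < k
  | H, _ => True
  | lam u, k => ClosedAbove u (k+1)
  | app u v, k => ClosedAbove u k ∧ ClosedAbove v k

theorem ca_mono : ∀ (t : LamH) (k k' : ℕ), ClosedAbove t k → k ≤ k' → ClosedAbove t k' := by
  intro t
  induction t with
  | var n => intro k k' h hk; simp only [ClosedAbove] at *; omega
  | H => intros; trivial
  | lam u ih => intro k k' h hk; exact ih _ _ h (by omega)
  | app u v ihu ihv => intro k k' h hk; exact ⟨ihu _ _ h.1 hk, ihv _ _ h.2 hk⟩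

theorem ca_lift : ∀ (t : LamH) (k d : ℕ), ClosedAbove t k → k ≤ d → lift t d = t := by
  intro t
  induction t with
  | var n => intro k d h hk; simp only [ClosedAbove] at h; simp only [lift]; rw [if_pos (by omega)]
  | H => intros; rfl
  | lam u ih => intro k d h hk; simp only [lift]; rw [ih (k+1) (d+1) h (by omega)]
  | app u v ihu ihv => intro k d h hk; simp only [lift]; rw [ihu _ _ h.1 hk, ihv _ _ h.2 hk]

theorem ca_subst : ∀ (t : LamH) (k j : ℕ) (s : LamH), ClosedAbove t k → k ≤ j → subst t j s = t := by
  intro t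
  induction t with
  | var n =>
    intro k j s h hk; simp only [ClosedAbove] at h; simp only [subst]
    rw [if_neg (by omega), if_neg (by omega)]
  | H => intros; rfl
  | lam u ih => intro k j s h hk; simp only [subst]; rw [ih (k+1) (j+1) _ h (by omega)]
  | app u v ihu ihv => intro k j s h hk; simp only [subst]; rw [ihu _ _ _ h.1 hk, ihv _ _ _ h.2 hk]

theorem ca_lift_incr : ∀ (t : LamH) (k d : ℕ), ClosedAbove t k → ClosedAbove (lift t d) (k+1) := by
  intro t
  induction t with
  | var n =>
    intro k d h; simp only [ClosedAbove] at h; simp only [lift]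
    split_ifs <;> simp only [ClosedAbove] <;> omega
  | H => intros; trivial
  | lam u ih => intro k d h; exact ih (k+1) (d+1) h
  | app u v ihu ihv => intro k d h; exact ⟨ihu _ _ h.1, ihv _ _ h.2⟩

theorem ca_J : ClosedAbove Jterm 0 := by
  simp only [Jterm, thetaTerm, deltaTerm, Gterm, ClosedAbove]
  omega

@[simp] theorem lift_J : ∀ d, lift Jterm d = Jterm := fun d => ca_lift _ 0 d ca_J (by omega)
@[simp] theorem subst_J : ∀ j s, subst Jterm j s = Jterm := fun j s => ca_subst _ 0 j s ca_J (by omega)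

/-! ### Head reduction closure lemmas -/

theorem head_shape : ∀ {t a : LamH}, Head t a →
    (∃ u v, t = app u v) ∨ (∃ u, t = lam u) := by
  intro t a h
  cases h with
  | beta u v => exact Or.inl ⟨_, _, rfl⟩
  | appL v h hn => exact Or.inl ⟨_, _, rfl⟩
  | abs h => exact Or.inr ⟨_, rfl⟩

theorem head_lift : ∀ {t a : LamH}, Head t a → ∀ d, Head (lift t d) (lift a d) := by
  intro t a h
  induction h with
  | beta u v =>
    intro d
    have := Head.beta (lift u (d+1)) (lift v d)
    rw [← lift_subst u v 0 d (by omega)] at this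
    exact this
  | appL v h hn ih =>
    intro d
    refine Head.appL _ (ih d) ?_
    rcases head_shape h with ⟨x, y, rfl⟩ | ⟨x, rfl⟩
    · intro w hw; simp only [lift] at hw; cases hw
    · exact absurd rfl (hn x)
  | abs h ih => intro d; exact Head.abs (ih (d+1))

theorem head_subst : ∀ {t a : LamH}, Head t a → ∀ k s, Head (subst t k s) (subst a k s) := by
  intro t a h
  induction h with
  | beta u v =>
    intro k s
    have := Head.beta (subst u (k+1) (lift s 0)) (subst v k s)
    rw [← subst_subst u v s 0 k (by omega)] at this
    exact this
  | appL v h hn ih =>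
    intro k s
    refine Head.appL _ (ih k s) ?_
    rcases head_shape h with ⟨x, y, rfl⟩ | ⟨x, rfl⟩
    · intro w hw; simp only [subst] at hw; cases hw
    · exact absurd rfl (hn x)
  | abs h ih => intro k s; exact Head.abs (ih (k+1) (lift s 0))

/-! ### The simulation relation -/

abbrev Mstep (a b : LamH) : Prop := Jred a b ∨ Head a b


@[simp] theorem lift_app (u v : LamH) (d : ℕ) : lift (app u v) d = app (lift u d) (lift v d) := rfl
@[simp] theorem subst_app (u v : LamH) (k : ℕ) (s : LamH) :
    subst (app u v) k s = app (subst u k s) (subst v k s) := rfl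
theorem lift_lam' (u : LamH) (d : ℕ) : lift (lam u) d = lam (lift u (d+1)) := rfl
theorem subst_lam' (u : LamH) (k : ℕ) (s : LamH) :
    subst (lam u) k s = lam (subst u (k+1) (lift s 0)) := rfl

inductive Sim : LamH → LamH → Prop
  | var (n : ℕ) : Sim (var n) (var n)
  | H : Sim H Jterm
  | lam {M N : LamH} : Sim M N → Sim (lam M) (lam N)
  | app {M N P Q : LamH} : Sim M N → Sim P Q → Sim (app M P) (app N Q)
  | guard {M N : LamH} : Sim M N → Sim M (app Jterm N)
  | wrap {M N A : LamH} : Sim M N → Sim (var 0) A → Sim M (lam (app (lift N 0) A))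

theorem sim_var_closed : ∀ {M A : LamH}, Sim M A → ∀ k, M = var k → ClosedAbove A (k+1) := by
  intro M A h
  induction h with
  | var n => intro k hk; cases hk; simp only [ClosedAbove]; omega
  | H => intro k hk; cases hk
  | lam _ _ => intro k hk; cases hk
  | app _ _ _ _ => intro k hk; cases hk
  | guard _ ih =>
    intro k hk
    exact ⟨ca_mono _ 0 _ ca_J (by omega), ih k hk⟩
  | wrap _ hA ihN ihA =>
    intro k hk
    exact ⟨ca_lift_incr _ _ _ (ihN k hk), ca_mono _ 1 _ (ihA 0 rfl) (by omega)⟩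

theorem ca_of_simvar {A : LamH} (h : Sim (var 0) A) : ClosedAbove A 1 :=
  sim_var_closed h 0 rfl

theorem sim_lift : ∀ {M N : LamH}, Sim M N → ∀ d, Sim (lift M d) (lift N d) := by
  intro M N h
  induction h with
  | var n => intro d; simp only [lift]; split_ifs <;> exact Sim.var _
  | H => intro d; rw [lift_J]; exact Sim.H
  | lam _ ih => intro d; exact Sim.lam (ih (d+1))
  | app _ _ ih1 ih2 => intro d; exact Sim.app (ih1 d) (ih2 d)
  | guard _ ih => intro d; rw [lift_app, lift_J]; exact Sim.guard (ih d)
  | wrap hMN hA ihN _ =>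
    intro d
    simp only [lift]
    rw [lift_lift _ 0 d (by omega), ca_lift _ 1 (d+1) (ca_of_simvar hA) (by omega)]
    exact Sim.wrap (ihN d) hA

theorem sim_subst : ∀ {M N : LamH}, Sim M N → ∀ (P Q : LamH) (k : ℕ), Sim P Q →
    Sim (subst M k P) (subst N k Q) := by
  intro M N h
  induction h with
  | var n =>
    intro P Q k hPQ
    simp only [subst]; split_ifs <;> first | exact hPQ | exact Sim.var _
  | H => intro P Q k hPQ; simp only [subst, subst_J]; exact Sim.H
  | lam _ ih => intro P Q k hPQ; exact Sim.lam (ih _ _ (k+1) (sim_lift hPQ 0))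
  | app _ _ ih1 ih2 => intro P Q k hPQ; exact Sim.app (ih1 _ _ k hPQ) (ih2 _ _ k hPQ)
  | guard _ ih => intro P Q k hPQ; rw [subst_app, subst_J]; exact Sim.guard (ih _ _ k hPQ)
  | wrap hMN hA ihN _ =>
    intro P Q k hPQ
    simp only [subst]
    rw [subst_lift _ _ k 0 (by omega), ca_subst _ 1 (k+1) _ (ca_of_simvar hA) (by omega)]
    exact Sim.wrap (ihN _ _ k hPQ) hA

/-- substitute `A` for the variable `k` of `N`, keeping all other indices. -/
theorem sim_gsub : ∀ {M N : LamH}, Sim M N → ∀ (k : ℕ) (A : LamH), Sim (var k) A →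
    Sim M (subst (lift N (k+1)) k A) := by
  intro M N h
  induction h with
  | var n =>
    intro k A hA
    simp only [lift]
    by_cases h1 : n < k + 1
    · rw [if_pos h1]
      simp only [subst]
      by_cases h2 : n = k
      · rw [if_pos h2]; cases h2; exact hA
      · rw [if_neg h2, if_neg (by omega)]; exact Sim.var n
    · rw [if_neg h1]
      simp only [subst]
      rw [if_neg (by omega), if_pos (by omega)]
      have e : n + 1 - 1 = n := by omega
      rw [e]; exact Sim.var n
  | H => intro k A hA; rw [lift_J, subst_J]; exact Sim.H
  | lam _ ih =>
    intro k A hA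
    simp only [lift, subst]
    refine Sim.lam (ih (k+1) (lift A 0) ?_)
    have := sim_lift hA 0
    simpa only [lift, if_neg (by omega : ¬ k < 0)] using this
  | app _ _ ih1 ih2 =>
    intro k A hA
    exact Sim.app (ih1 k A hA) (ih2 k A hA)
  | guard _ ih =>
    intro k A hA
    rw [lift_app, lift_J, subst_app, subst_J]
    exact Sim.guard (ih k A hA)
  | wrap hMN hA1 ihN _ =>
    intro k A hA
    simp only [lift, subst]
    rw [lift_lift _ 0 (k+1) (by omega), subst_lift _ _ k 0 (by omega),
        ca_lift _ 1 (k+2) (ca_of_simvar hA1) (by omega),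
        ca_subst _ 1 (k+1) _ (ca_of_simvar hA1) (by omega)]
    exact Sim.wrap (ihN k A hA) hA1

theorem sim_wsub : ∀ {M B A : LamH}, Sim M (lam B) → Sim (var 0) A →
    Sim M (lam (subst (lift B 1) 0 A)) := by
  intro M B A h hA
  cases h with
  | lam hMB => exact Sim.lam (sim_gsub hMB 0 A hA)
  | @wrap M' N' A1 hMN hA1 =>
    simp only [lift]
    rw [lift_lift _ 0 0 (by omega)]
    simp only [subst]
    rw [subst_lift_cancel, ca_lift _ 1 1 (ca_of_simvar hA1) (by omega)]
    have hsub : Sim (var 0) (subst A1 0 A) := by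
      have := sim_subst hA1 (var 0) A 0 hA
      simpa only [subst, if_pos rfl, if_true] using this
    exact Sim.wrap hMN hsub

/-! ### Chains of head steps whose sources are not abstractions -/

def HeadA (a b : LamH) : Prop := Head a b ∧ ∀ w, a ≠ lam w

theorem headA_appL {a b : LamH} (c : LamH) (h : HeadA a b) : HeadA (app a c) (app b c) :=
  ⟨Head.appL c h.1 h.2, fun w hw => by cases hw⟩

theorem tgA_appL {a b : LamH} (c : LamH) (h : Relation.TransGen HeadA a b) :
    Relation.TransGen HeadA (app a c) (app b c) :=
  Relation.TransGen.lift (fun x => app x c) (fun _ _ h => headA_appL c h) _ _ h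

theorem rtgA_appL {a b : LamH} (c : LamH) (h : Relation.ReflTransGen HeadA a b) :
    Relation.ReflTransGen HeadA (app a c) (app b c) :=
  Relation.ReflTransGen.lift (fun x => app x c) (fun _ _ h => headA_appL c h) _ _ h

theorem tgA_head {a b : LamH} (h : Relation.TransGen HeadA a b) : Relation.TransGen Head a b :=
  Relation.TransGen.mono (fun _ _ h => h.1) _ _ h

theorem rtg_abs {a b : LamH} (h : Relation.ReflTransGen Head a b) :
    Relation.ReflTransGen Head (lam a) (lam b) :=
  Relation.ReflTransGen.lift LamH.lam (fun _ _ h => Head.abs h) _ _ h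

theorem tg_abs {a b : LamH} (h : Relation.TransGen Head a b) :
    Relation.TransGen Head (lam a) (lam b) :=
  Relation.TransGen.lift LamH.lam (fun _ _ h => Head.abs h) _ _ h

theorem rtg_lift {a b : LamH} (h : Relation.ReflTransGen Head a b) (d : ℕ) :
    Relation.ReflTransGen Head (lift a d) (lift b d) :=
  Relation.ReflTransGen.lift (fun x => lift x d) (fun _ _ h => head_lift h d) _ _ h

theorem tg_lift {a b : LamH} (h : Relation.TransGen Head a b) (d : ℕ) :
    Relation.TransGen Head (lift a d) (lift b d) :=
  Relation.TransGen.lift (fun x => lift x d) (fun _ _ h => head_lift h d) _ _ h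

theorem rtg_subst {a b : LamH} (h : Relation.ReflTransGen Head a b) (k : ℕ) (s : LamH) :
    Relation.ReflTransGen Head (subst a k s) (subst b k s) :=
  Relation.ReflTransGen.lift (fun x => subst x k s) (fun _ _ h => head_subst h k s) _ _ h

theorem tg_subst {a b : LamH} (h : Relation.TransGen Head a b) (k : ℕ) (s : LamH) :
    Relation.TransGen Head (subst a k s) (subst b k s) :=
  Relation.TransGen.lift (fun x => subst x k s) (fun _ _ h => head_subst h k s) _ _ h

/-- Paths starting from an abstraction stay abstractions. -/
theorem lam_path_rtg : ∀ {a z : LamH}, Relation.ReflTransGen Head a z →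
    ∀ B, a = lam B → ∃ B', z = lam B' ∧ Relation.ReflTransGen Head B B' := by
  intro a z h
  induction h using Relation.ReflTransGen.head_induction_on with
  | refl => intro B hB; exact ⟨B, hB, Relation.ReflTransGen.refl⟩
  | head hstep htail ih =>
    intro B hB
    subst hB
    cases hstep with
    | abs h1 =>
      obtain ⟨B', hz, hp⟩ := ih _ rfl
      exact ⟨B', hz, Relation.ReflTransGen.head h1 hp⟩

theorem lam_path_tg : ∀ {a z : LamH}, Relation.TransGen Head a z →
    ∀ B, a = lam B → ∃ B', z = lam B' ∧ Relation.TransGen Head B B' := by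
  intro a z h
  induction h using Relation.TransGen.head_induction_on with
  | single hstep =>
    intro B hB; subst hB
    cases hstep with
    | abs h1 => exact ⟨_, rfl, Relation.TransGen.single h1⟩
  | head hstep htail ih =>
    intro B hB; subst hB
    cases hstep with
    | abs h1 =>
      obtain ⟨B', hz, hp⟩ := ih _ rfl
      exact ⟨B', hz, Relation.TransGen.head h1 hp⟩

theorem lift_ne_lam {X : LamH} (h : ∀ w, X ≠ lam w) (d : ℕ) : ∀ w, lift X d ≠ lam w := by
  intro w hw
  cases X <;> simp only [lift] at hw
  · split_ifs at hw <;> cases hw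
  · cases hw
  · exact h _ rfl
  · cases hw

/-! ### Reduction of the J-term -/


theorem subst_var_self (n : ℕ) (s : LamH) : subst (var n) n s = s := by
  simp [subst]
theorem subst_var_small {n k : ℕ} (h : n < k) (s : LamH) : subst (var n) k s = var n := by
  simp only [subst]; rw [if_neg (by omega), if_neg (by omega)]

def R1 : LamH := lam (app (var 0) (app thetaTerm (var 0)))
def GJ : LamH := lam (lam (app (var 1) (app Jterm (var 0))))
def Jv : LamH := app Jterm (var 0)

theorem simvar_Jv : Sim (var 0) Jv := Sim.guard (Sim.var 0)

theorem step_theta : Head thetaTerm R1 := by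
  have h := Head.beta (lam (app (var 0) (app (app (var 1) (var 1)) (var 0)))) deltaTerm
  have e : subst (lam (app (var 0) (app (app (var 1) (var 1)) (var 0)))) 0 deltaTerm = R1 := by
    decide
  rw [e] at h
  exact h

theorem step_R1G : Head (app R1 Gterm) (app Gterm Jterm) := by
  have h := Head.beta (app (var 0) (app thetaTerm (var 0))) Gterm
  have e : subst (app (var 0) (app thetaTerm (var 0))) 0 Gterm = app Gterm Jterm := by decide
  rw [e] at h
  exact h

theorem step_GJ : Head (app Gterm Jterm) GJ := by
  have h := Head.beta (lam (lam (app (var 1) (app (var 2) (var 0))))) Jterm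
  have e : subst (lam (lam (app (var 1) (app (var 2) (var 0))))) 0 Jterm = GJ := by decide
  rw [e] at h
  exact h

theorem step_GJX (X : LamH) : Head (app GJ X) (lam (app (lift X 0) Jv)) := by
  have h := Head.beta (lam (app (var 1) (app Jterm (var 0)))) X
  have e : subst (lam (app (var 1) (app Jterm (var 0)))) 0 X = lam (app (lift X 0) Jv) := by
    rw [subst_lam', subst_app, subst_app, subst_J, subst_var_self,
        subst_var_small (by omega : (0:ℕ) < 1)]
    rfl
  rw [e] at h
  exact h

/-- `J X  →⁴  λz. X↑ (J z)`, all sources applications. -/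
theorem jred_sim_one (X : LamH) :
    Relation.TransGen HeadA (app Jterm X) (lam (app (lift X 0) Jv)) := by
  have napp : ∀ (u v : LamH) (w : LamH), app u v ≠ lam w := by intro u v w h; cases h
  have h1 : HeadA (app Jterm X) (app (app R1 Gterm) X) :=
    ⟨Head.appL X (Head.appL Gterm step_theta (napp _ _)) (napp _ _), napp _ _⟩
  have h2 : HeadA (app (app R1 Gterm) X) (app (app Gterm Jterm) X) :=
    ⟨Head.appL X step_R1G (napp _ _), napp _ _⟩
  have h3 : HeadA (app (app Gterm Jterm) X) (app GJ X) :=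
    ⟨Head.appL X step_GJ (napp _ _), napp _ _⟩
  have h4 : HeadA (app GJ X) (lam (app (lift X 0) Jv)) := ⟨step_GJX X, napp _ _⟩
  exact Relation.TransGen.head h1 (Relation.TransGen.head h2
    (Relation.TransGen.head h3 (Relation.TransGen.single h4)))

theorem key_subst (X A s : LamH) :
    subst (app (lift X 0) A) 0 s = app X (subst A 0 s) := by
  rw [subst_app, subst_lift_cancel]

theorem key_subst_Jv (X s : LamH) :
    subst (app (lift X 0) Jv) 0 s = app X (app Jterm s) := by
  rw [key_subst]
  show app X (subst (app Jterm (var 0)) 0 s) = _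
  rw [subst_app, subst_J, subst_var_self]

/-- the β-step consuming a wrap shell, as a HeadA step -/
theorem headA_wrapbeta (X A s : LamH) :
    HeadA (app (lam (app (lift X 0) A)) s) (app X (subst A 0 s)) := by
  have h := Head.beta (app (lift X 0) A) s
  rw [key_subst] at h
  exact ⟨h, fun w hw => by cases hw⟩

/-! ### Inversion and shape lemmas -/

theorem lam_or_not : ∀ t : LamH, (∃ B, t = lam B) ∨ (∀ w, t ≠ lam w) := by
  intro t
  cases t with
  | lam u => exact Or.inl ⟨u, rfl⟩
  | var n => exact Or.inr (fun w hw => by cases hw)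
  | H => exact Or.inr (fun w hw => by cases hw)
  | app u v => exact Or.inr (fun w hw => by cases hw)

theorem sim_lam_inv {M L : LamH} (h : Sim M L) : ∀ B, L = lam B →
    (∃ Q, M = lam Q ∧ Sim Q B) ∨ (∃ Y A, B = app (lift Y 0) A ∧ Sim M Y ∧ Sim (var 0) A) := by
  cases h with
  | var n => intro B hB; cases hB
  | H => intro B hB; simp [Jterm, thetaTerm] at hB
  | lam h1 => intro B hB; cases hB; exact Or.inl ⟨_, rfl, h1⟩
  | app h1 h2 => intro B hB; cases hB
  | guard h1 => intro B hB; cases hB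
  | wrap h1 hA => intro B hB; cases hB; exact Or.inr ⟨_, _, rfl, h1, hA⟩

theorem no_step_var {n : ℕ} {w : LamH} (h : Mstep (var n) w) : False := by
  rcases h with h | h <;> cases h

theorem no_step_H {w : LamH} (h : Mstep LamH.H w) : False := by
  rcases h with h | h <;> cases h

theorem mstep_shape {a b : LamH} (h : Mstep a b) :
    (∃ u v, a = app u v) ∨ (∃ u, a = lam u) := by
  rcases h with h | h
  · cases h with
    | one v => exact Or.inl ⟨_, _, rfl⟩
    | two u v => exact Or.inl ⟨_, _, rfl⟩
    | appL v h1 h2 h3 => exact Or.inl ⟨_, _, rfl⟩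
    | abs h1 => exact Or.inr ⟨_, rfl⟩
  · exact head_shape h

theorem mstep_lam_inv {u w : LamH} (h : Mstep (lam u) w) : ∃ u', w = lam u' ∧ Mstep u u' := by
  rcases h with h | h
  · cases h with | abs h1 => exact ⟨_, rfl, Or.inl h1⟩
  · cases h with | abs h1 => exact ⟨_, rfl, Or.inr h1⟩

theorem mstep_app_inv {u v w : LamH} (h : Mstep (app u v) w) :
    (∃ P, u = lam P ∧ w = subst P 0 v) ∨
    (u = LamH.H ∧ w = v) ∨
    (∃ a, u = app LamH.H a ∧ w = app a (app LamH.H v)) ∨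
    (∃ u', Mstep u u' ∧ (∀ x, u ≠ lam x) ∧ w = app u' v) := by
  rcases h with h | h
  · cases h with
    | one v => exact Or.inr (Or.inl ⟨rfl, rfl⟩)
    | two a b => exact Or.inr (Or.inr (Or.inl ⟨_, rfl, rfl⟩))
    | appL v h1 h2 h3 => exact Or.inr (Or.inr (Or.inr ⟨_, Or.inl h1, h2, rfl⟩))
  · cases h with
    | beta P v => exact Or.inl ⟨_, rfl, rfl⟩
    | appL v h1 h2 => exact Or.inr (Or.inr (Or.inr ⟨_, Or.inr h1, h2, rfl⟩))

/-! ### Replay lemmas -/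

theorem wreplay_lam {B B' : LamH} (hp : Relation.TransGen Head B B') (M A : LamH)
    (hM : Sim M (lam B')) (hA : Sim (var 0) A) :
    ∃ T, Relation.TransGen Head (lam (app (lift (lam B) 0) A)) T ∧ Sim M T := by
  refine ⟨lam (subst (lift B' 1) 0 A), ?_, sim_wsub hM hA⟩
  have h1 : Head (lam (app (lift (lam B) 0) A)) (lam (subst (lift B 1) 0 A)) :=
    Head.abs (Head.beta (lift B 1) A)
  exact Relation.TransGen.head h1 (tg_abs (tg_subst (tg_lift hp 1) 0 A))

theorem wreplay : ∀ {X Y : LamH}, Relation.TransGen Head X Y → ∀ (M A : LamH),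
    Sim M Y → Sim (var 0) A →
    ∃ T, Relation.TransGen Head (lam (app (lift X 0) A)) T ∧ Sim M T := by
  intro X Y h
  induction h using Relation.TransGen.head_induction_on with
  | @single a hstep =>
    intro M A hM hA
    rcases lam_or_not a with ⟨B, rfl⟩ | hnl
    · cases hstep with
      | abs h1 => exact wreplay_lam (Relation.TransGen.single h1) M A hM hA
    · refine ⟨lam (app (lift Y 0) A), ?_, Sim.wrap hM hA⟩
      exact Relation.TransGen.single
        (Head.abs (Head.appL A (head_lift hstep 0) (lift_ne_lam hnl 0)))
  | @head a c hstep htail ih =>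
    intro M A hM hA
    rcases lam_or_not a with ⟨B, rfl⟩ | hnl
    · obtain ⟨B', hz, hp⟩ := lam_path_tg (Relation.TransGen.head hstep htail) B rfl
      rw [hz] at hM
      exact wreplay_lam hp M A hM hA
    · obtain ⟨T, hT, hSim⟩ := ih M A hM hA
      exact ⟨T, Relation.TransGen.head
        (Head.abs (Head.appL A (head_lift hstep 0) (lift_ne_lam hnl 0))) hT, hSim⟩

theorem appreplay_lam {B B' : LamH} (hp : Relation.TransGen Head B B') (Ml Mr N₂ : LamH)
    (hMl : Sim Ml (lam B')) (hMr : Sim Mr N₂) :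
    ∃ Mf T, Relation.ReflTransGen HeadA (app Ml Mr) Mf ∧
      Relation.TransGen Head (app (lam B) N₂) T ∧ Sim Mf T := by
  have hred : Relation.TransGen Head (app (lam B) N₂) (subst B' 0 N₂) :=
    Relation.TransGen.head (Head.beta B N₂) (tg_subst hp 0 N₂)
  rcases sim_lam_inv hMl B' rfl with ⟨Q, rfl, hQ⟩ | ⟨Y, A, rfl, hY, hA⟩
  · exact ⟨subst Q 0 Mr, subst B' 0 N₂,
      Relation.ReflTransGen.single ⟨Head.beta Q Mr, fun w hw => by cases hw⟩,
      hred, sim_subst hQ Mr N₂ 0 hMr⟩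
  · refine ⟨app Ml Mr, subst (app (lift Y 0) A) 0 N₂, Relation.ReflTransGen.refl, hred, ?_⟩
    rw [key_subst]
    have hMr' : Sim Mr (subst A 0 N₂) := by
      have := sim_subst hA Mr N₂ 0 hMr
      rwa [subst_var_self] at this
    exact Sim.app hY hMr'

theorem appreplay : ∀ {X Y : LamH}, Relation.TransGen Head X Y → ∀ (Ml Mr N₂ : LamH),
    Sim Ml Y → Sim Mr N₂ →
    ∃ Mf T, Relation.ReflTransGen HeadA (app Ml Mr) Mf ∧
      Relation.TransGen Head (app X N₂) T ∧ Sim Mf T := by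
  intro X Y h
  induction h using Relation.TransGen.head_induction_on with
  | @single a hstep =>
    intro Ml Mr N₂ hMl hMr
    rcases lam_or_not a with ⟨B, rfl⟩ | hnl
    · cases hstep with
      | abs h1 => exact appreplay_lam (Relation.TransGen.single h1) Ml Mr N₂ hMl hMr
    · exact ⟨app Ml Mr, app Y N₂, Relation.ReflTransGen.refl,
        Relation.TransGen.single (Head.appL N₂ hstep hnl), Sim.app hMl hMr⟩
  | @head a c hstep htail ih =>
    intro Ml Mr N₂ hMl hMr
    rcases lam_or_not a with ⟨B, rfl⟩ | hnl
    · obtain ⟨B', hz, hp⟩ := lam_path_tg (Relation.TransGen.head hstep htail) B rfl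
      rw [hz] at hMl
      exact appreplay_lam hp Ml Mr N₂ hMl hMr
    · obtain ⟨Mf, T, hcu, hT, hS⟩ := ih Ml Mr N₂ hMl hMr
      exact ⟨Mf, T, hcu, Relation.TransGen.head (Head.appL N₂ hstep hnl) hT, hS⟩

/-! ### Auxiliary head-redex simulations -/

theorem betaaux : ∀ {M N₁ : LamH}, Sim M N₁ → ∀ P, M = lam P → ∀ M₂ N₂, Sim M₂ N₂ →
    ∃ T, Relation.TransGen HeadA (app N₁ N₂) T ∧ Sim (subst P 0 M₂) T := by
  intro M N₁ h
  induction h with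
  | var n => intro P hP; cases hP
  | H => intro P hP; cases hP
  | app h1 h2 ih1 ih2 => intro P hP; cases hP
  | lam h1 ih =>
    intro P hP M₂ N₂ hMN
    cases hP
    exact ⟨_, Relation.TransGen.single ⟨Head.beta _ N₂, fun w hw => by cases hw⟩,
      sim_subst h1 M₂ N₂ 0 hMN⟩
  | @guard M N₀ h1 ih =>
    intro P hP M₂ N₂ hMN
    obtain ⟨T, hT, hS⟩ := ih P hP M₂ (app Jterm N₂) (Sim.guard hMN)
    have hb := Head.beta (app (lift N₀ 0) Jv) N₂
    rw [key_subst_Jv] at hb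
    exact ⟨T, (tgA_appL N₂ (jred_sim_one N₀)).trans
      (Relation.TransGen.head ⟨hb, fun w hw => by cases hw⟩ hT), hS⟩
  | @wrap M N₀ A h1 hA ih ihA =>
    intro P hP M₂ N₂ hMN
    have hMr : Sim M₂ (subst A 0 N₂) := by
      have := sim_subst hA M₂ N₂ 0 hMN
      rwa [subst_var_self] at this
    obtain ⟨T, hT, hS⟩ := ih P hP M₂ (subst A 0 N₂) hMr
    exact ⟨T, Relation.TransGen.head (headA_wrapbeta N₀ A N₂) hT, hS⟩

theorem joneaux : ∀ {M N₁ : LamH}, Sim M N₁ → M = LamH.H → ∀ M₂ N₂, Sim M₂ N₂ →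
    ∃ T, Relation.TransGen HeadA (app N₁ N₂) T ∧ Sim M₂ T := by
  intro M N₁ h
  induction h with
  | var n => intro hP; cases hP
  | lam h1 ih => intro hP; cases hP
  | app h1 h2 ih1 ih2 => intro hP; cases hP
  | H =>
    intro _ M₂ N₂ hMN
    exact ⟨lam (app (lift N₂ 0) Jv), jred_sim_one N₂, Sim.wrap hMN simvar_Jv⟩
  | @guard M N₀ h1 ih =>
    intro hM M₂ N₂ hMN
    obtain ⟨T, hT, hS⟩ := ih hM M₂ (app Jterm N₂) (Sim.guard hMN)
    have hb := Head.beta (app (lift N₀ 0) Jv) N₂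
    rw [key_subst_Jv] at hb
    exact ⟨T, (tgA_appL N₂ (jred_sim_one N₀)).trans
      (Relation.TransGen.head ⟨hb, fun w hw => by cases hw⟩ hT), hS⟩
  | @wrap M N₀ A h1 hA ih ihA =>
    intro hM M₂ N₂ hMN
    have hMr : Sim M₂ (subst A 0 N₂) := by
      have := sim_subst hA M₂ N₂ 0 hMN
      rwa [subst_var_self] at this
    obtain ⟨T, hT, hS⟩ := ih hM M₂ (subst A 0 N₂) hMr
    exact ⟨T, Relation.TransGen.head (headA_wrapbeta N₀ A N₂) hT, hS⟩

theorem jtwoaux1 : ∀ {M NH : LamH}, Sim M NH → M = LamH.H →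
    ∀ (U NU M₂ N₂ : LamH), Sim U NU → Sim M₂ N₂ →
    ∃ T, Relation.TransGen HeadA (app (app NH NU) N₂) T ∧ Sim (app U (app LamH.H M₂)) T := by
  intro M NH h
  induction h with
  | var n => intro hP; cases hP
  | lam h1 ih => intro hP; cases hP
  | app h1 h2 ih1 ih2 => intro hP; cases hP
  | H =>
    intro _ U NU M₂ N₂ hU hM
    have c1 := tgA_appL N₂ (jred_sim_one NU)
    have hb := Head.beta (app (lift NU 0) Jv) N₂
    rw [key_subst_Jv] at hb
    exact ⟨app NU (app Jterm N₂),
      c1.trans (Relation.TransGen.single ⟨hb, fun w hw => by cases hw⟩),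
      Sim.app hU (Sim.app Sim.H hM)⟩
  | @guard M N₀ h1 ih =>
    intro hM U NU M₂ N₂ hU hM2
    have c1 := tgA_appL N₂ (tgA_appL NU (jred_sim_one N₀))
    have hb := Head.beta (app (lift N₀ 0) Jv) NU
    rw [key_subst_Jv] at hb
    have hstep : HeadA (app (app (lam (app (lift N₀ 0) Jv)) NU) N₂)
        (app (app N₀ (app Jterm NU)) N₂) :=
      headA_appL N₂ ⟨hb, fun w hw => by cases hw⟩
    obtain ⟨T, hT, hS⟩ := ih hM U (app Jterm NU) M₂ N₂ (Sim.guard hU) hM2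
    exact ⟨T, c1.trans (Relation.TransGen.head hstep hT), hS⟩
  | @wrap M N₀ A h1 hA ih ihA =>
    intro hM U NU M₂ N₂ hU hM2
    have hU' : Sim U (subst A 0 NU) := by
      have := sim_subst hA U NU 0 hU
      rwa [subst_var_self] at this
    obtain ⟨T, hT, hS⟩ := ih hM U (subst A 0 NU) M₂ N₂ hU' hM2
    exact ⟨T, Relation.TransGen.head (headA_appL N₂ (headA_wrapbeta N₀ A NU)) hT, hS⟩

theorem jtwoaux : ∀ {M N₁ : LamH}, Sim M N₁ → ∀ U, M = app LamH.H U →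
    ∀ M₂ N₂, Sim M₂ N₂ →
    ∃ T, Relation.TransGen HeadA (app N₁ N₂) T ∧ Sim (app U (app LamH.H M₂)) T := by
  intro M N₁ h
  induction h with
  | var n => intro U hP; cases hP
  | H => intro U hP; cases hP
  | lam h1 ih => intro U hP; cases hP
  | @app Ma Na Mb Nb h1 h2 ih1 ih2 =>
    intro U hP M₂ N₂ hM2
    injection hP with e1 e2
    subst e2
    exact jtwoaux1 h1 e1 Mb Nb M₂ N₂ h2 hM2
  | @guard M N₀ h1 ih =>
    intro U hP M₂ N₂ hM2
    obtain ⟨T, hT, hS⟩ := ih U hP M₂ (app Jterm N₂) (Sim.guard hM2)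
    have hb := Head.beta (app (lift N₀ 0) Jv) N₂
    rw [key_subst_Jv] at hb
    exact ⟨T, (tgA_appL N₂ (jred_sim_one N₀)).trans
      (Relation.TransGen.head ⟨hb, fun w hw => by cases hw⟩ hT), hS⟩
  | @wrap M N₀ A h1 hA ih ihA =>
    intro U hP M₂ N₂ hM2
    have hMr : Sim M₂ (subst A 0 N₂) := by
      have := sim_subst hA M₂ N₂ 0 hM2
      rwa [subst_var_self] at this
    obtain ⟨T, hT, hS⟩ := ih U hP M₂ (subst A 0 N₂) hMr
    exact ⟨T, Relation.TransGen.head (headA_wrapbeta N₀ A N₂) hT, hS⟩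

/-! ### The forward simulation -/

theorem fsim : ∀ {M N : LamH}, Sim M N → ∀ M', Mstep M M' →
    ∃ Mf T, Relation.ReflTransGen Head M' Mf ∧ Relation.TransGen Head N T ∧ Sim Mf T ∧
      ((∃ u v, M = app u v) → Relation.ReflTransGen HeadA M' Mf) := by
  intro M N h
  induction h with
  | var n => intro M' hs; exact (no_step_var hs).elim
  | H => intro M' hs; exact (no_step_H hs).elim
  | @lam M₀ N₀ h1 ih =>
    intro M' hs
    obtain ⟨M₀', rfl, hs0⟩ := mstep_lam_inv hs
    obtain ⟨Mf, T, hch, hT, hS, _⟩ := ih M₀' hs0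
    refine ⟨lam Mf, lam T, rtg_abs hch, tg_abs hT, Sim.lam hS, ?_⟩
    rintro ⟨u, v, hE⟩; cases hE
  | @app Ma Na Mb Nb h1 h2 ih1 ih2 =>
    intro M' hs
    rcases mstep_app_inv hs with ⟨P, ha, hw⟩ | ⟨ha, hw⟩ | ⟨a, ha, hw⟩ | ⟨u', hu, hnl, hw⟩
    · cases hw
      obtain ⟨T, hT, hS⟩ := betaaux h1 P ha _ Nb h2
      exact ⟨_, T, Relation.ReflTransGen.refl, tgA_head hT, hS,
        fun _ => Relation.ReflTransGen.refl⟩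
    · cases hw
      obtain ⟨T, hT, hS⟩ := joneaux h1 ha _ Nb h2
      exact ⟨_, T, Relation.ReflTransGen.refl, tgA_head hT, hS,
        fun _ => Relation.ReflTransGen.refl⟩
    · cases hw
      obtain ⟨T, hT, hS⟩ := jtwoaux h1 a ha _ Nb h2
      exact ⟨_, T, Relation.ReflTransGen.refl, tgA_head hT, hS,
        fun _ => Relation.ReflTransGen.refl⟩
    · cases hw
      obtain ⟨Mf1, T1, hch1, hT1, hS1, hcu1⟩ := ih1 u' hu
      have hMaApp : ∃ x y, Ma = app x y := by
        rcases mstep_shape hu with hx | ⟨x, hx⟩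
        · exact hx
        · exact absurd hx (hnl x)
      have hcuA : Relation.ReflTransGen HeadA u' Mf1 := hcu1 hMaApp
      obtain ⟨Mf, T, hcu2, hT2, hS2⟩ := appreplay hT1 Mf1 Mb Nb hS1 h2
      have hchainA : Relation.ReflTransGen HeadA (app u' Mb) Mf :=
        Relation.ReflTransGen.trans (rtgA_appL Mb hcuA) hcu2
      exact ⟨Mf, T, Relation.ReflTransGen.mono (fun _ _ hh => hh.1) _ _ hchainA, hT2, hS2,
        fun _ => hchainA⟩
  | @guard M N₀ h1 ih =>
    intro M' hs
    obtain ⟨Mf, T₀, hch, hT0, hS, hcu⟩ := ih M' hs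
    obtain ⟨T, hT, hS2⟩ := wreplay hT0 Mf Jv hS simvar_Jv
    exact ⟨Mf, T, hch, (tgA_head (jred_sim_one N₀)).trans hT, hS2, hcu⟩
  | @wrap M N₀ A h1 hA ih ihA =>
    intro M' hs
    obtain ⟨Mf, T₀, hch, hT0, hS, hcu⟩ := ih M' hs
    obtain ⟨T, hT, hS2⟩ := wreplay hT0 Mf A hS hA
    exact ⟨Mf, T, hch, hT, hS2, hcu⟩

/-! ### Determinism and totality -/

theorem head_det : ∀ {t a b : LamH}, Head t a → Head t b → a = b := by
  intro t a b h1
  induction h1 generalizing b with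
  | beta u v =>
    intro h2
    cases h2 with
    | beta => rfl
    | appL v h hn => exact absurd rfl (hn _)
  | appL v h hn ih =>
    intro h2
    cases h2 with
    | beta => exact absurd rfl (hn _)
    | appL _ h' _ => rw [ih h']
  | abs h ih =>
    intro h2
    cases h2 with
    | abs h' => rw [ih h']

theorem jred_det : ∀ {t a b : LamH}, Jred t a → Jred t b → a = b := by
  intro t a b h1
  induction h1 generalizing b with
  | one v =>
    intro h2
    cases h2 with
    | one => rfl
    | appL v h hn hns => cases h
  | two u v =>
    intro h2
    cases h2 with
    | two => rfl
    | appL v h hn hns => exact absurd rfl (hns _)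
  | appL v h hn hns ih =>
    intro h2
    cases h2 with
    | one => cases h
    | two => exact absurd rfl (hns _)
    | appL _ h' _ _ => rw [ih h']
  | abs h ih =>
    intro h2
    cases h2 with
    | abs h' => rw [ih h']

theorem jred_head_disj : ∀ {t a b : LamH}, Jred t a → Head t b → False := by
  intro t a b h1
  induction h1 generalizing b with
  | one v =>
    intro h2
    cases h2 with
    | appL _ h _ => cases h
  | two u v =>
    intro h2
    cases h2 with
    | appL _ h _ =>
      cases h with
      | appL _ h' _ => cases h'
  | appL v h hn hns ih =>
    intro h2
    cases h2 with
    | beta => exact absurd rfl (hn _)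
    | appL _ h' _ => exact ih h'
  | abs h ih =>
    intro h2
    cases h2 with
    | abs h' => exact ih h'

theorem mstep_det : ∀ {t a b : LamH}, Mstep t a → Mstep t b → a = b := by
  intro t a b h1 h2
  rcases h1 with h1 | h1 <;> rcases h2 with h2 | h2
  · exact jred_det h1 h2
  · exact (jred_head_disj h1 h2).elim
  · exact (jred_head_disj h2 h1).elim
  · exact head_det h1 h2

theorem varapp_no_head : ∀ {t a : LamH}, VarApp t → Head t a → False := by
  intro t a hv
  induction hv generalizing a with
  | var n => intro h; cases h
  | app v hv ih =>
    intro h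
    cases h with
    | beta => cases hv
    | appL _ h' _ => exact ih h'

theorem varapp_no_jred : ∀ {t a : LamH}, VarApp t → Jred t a → False := by
  intro t a hv
  induction hv generalizing a with
  | var n => intro h; cases h
  | app v hv ih =>
    intro h
    cases h with
    | one => cases hv
    | two =>
      cases hv with
      | app _ hv' => cases hv'
    | appL _ h' _ _ => exact ih h'

theorem hnf_no_head : ∀ {t a : LamH}, Hnf t → Head t a → False := by
  intro t a h
  induction h generalizing a with
  | base hv => intro h2; exact varapp_no_head hv h2
  | lam h ih =>
    intro h2
    cases h2 with
    | abs h' => exact ih h'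

theorem mstep_lam_inv' {u w : LamH} (h : Mstep (lam u) w) : ∃ u', w = lam u' ∧ Mstep u u' := by
  rcases h with h | h
  · cases h with | abs h1 => exact ⟨_, rfl, Or.inl h1⟩
  · cases h with | abs h1 => exact ⟨_, rfl, Or.inr h1⟩

theorem hnfH_no_mstep : ∀ {t a : LamH}, HnfH t → Mstep t a → False := by
  intro t a h
  induction h generalizing a with
  | H => intro h2; exact no_step_H h2
  | base hv =>
    intro h2
    rcases h2 with h2 | h2
    · exact varapp_no_jred hv h2
    · exact varapp_no_head hv h2
  | lam h ih =>
    intro h2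
    obtain ⟨u', hE, h'⟩ := mstep_lam_inv h2
    exact ih h'

theorem tot_app_aux {a b v : LamH} (hne : ∀ w, app a b ≠ app LamH.H w)
    (ihu : HnfH (app a b) ∨ ∃ u', Mstep (app a b) u') :
    HnfH (app (app a b) v) ∨ ∃ M', Mstep (app (app a b) v) M' := by
  rcases ihu with h | ⟨u', h⟩
  · cases h with
    | base hv => exact Or.inl (HnfH.base (VarApp.app v hv))
  · rcases h with h | h
    · exact Or.inr ⟨app u' v, Or.inl (Jred.appL v h (fun w hw => by cases hw) hne)⟩
    · exact Or.inr ⟨app u' v, Or.inr (Head.appL v h (fun w hw => by cases hw))⟩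

theorem tot : ∀ M : LamH, HnfH M ∨ ∃ M', Mstep M M' := by
  intro M
  induction M with
  | var n => exact Or.inl (HnfH.base (VarApp.var n))
  | H => exact Or.inl HnfH.H
  | lam u ih =>
    rcases ih with h | ⟨u', h⟩
    · exact Or.inl (HnfH.lam h)
    · rcases h with h | h
      · exact Or.inr ⟨lam u', Or.inl (Jred.abs h)⟩
      · exact Or.inr ⟨lam u', Or.inr (Head.abs h)⟩
  | app u v ihu ihv =>
    cases u with
    | lam P => exact Or.inr ⟨_, Or.inr (Head.beta P v)⟩
    | H => exact Or.inr ⟨v, Or.inl (Jred.one v)⟩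
    | var n => exact Or.inl (HnfH.base (VarApp.app v (VarApp.var n)))
    | app a b =>
      cases a with
      | H => exact Or.inr ⟨_, Or.inl (Jred.two b v)⟩
      | var n =>
        exact tot_app_aux (fun w hw => by injection hw with h1 _; cases h1) ihu
      | lam P =>
        exact tot_app_aux (fun w hw => by injection hw with h1 _; cases h1) ihu
      | app c d =>
        exact tot_app_aux (fun w hw => by injection hw with h1 _; cases h1) ihu

/-! ### Counting reduction steps -/

def SolvN : ℕ → LamH → Prop
  | 0, t => Hnf t
  | n+1, t => Hnf t ∨ ∃ t', Head t t' ∧ SolvN n t'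

def JtSolvN : ℕ → LamH → Prop
  | 0, t => HnfH t
  | n+1, t => HnfH t ∨ ∃ t', Mstep t t' ∧ JtSolvN n t'

theorem solvN_step : ∀ {n : ℕ} {t t' : LamH}, SolvN n t → Head t t' → ∃ m < n, SolvN m t' := by
  intro n t t' hs h
  cases n with
  | zero => exact (hnf_no_head hs h).elim
  | succ n =>
    rcases hs with hs | ⟨t'', h1, hs⟩
    · exact (hnf_no_head hs h).elim
    · rw [head_det h h1]
      exact ⟨n, by omega, hs⟩

theorem solvN_tg : ∀ {t t' : LamH}, Relation.TransGen Head t t' → ∀ {n}, SolvN n t →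
    ∃ m < n, SolvN m t' := by
  intro t t' h
  induction h with
  | single h1 => intro n hs; exact solvN_step hs h1
  | tail hp h1 ih =>
    intro n hs
    obtain ⟨m, hm, hs'⟩ := ih hs
    obtain ⟨m', hm', hs''⟩ := solvN_step hs' h1
    exact ⟨m', by omega, hs''⟩

theorem jtsolvN_step : ∀ {n : ℕ} {t t' : LamH}, JtSolvN n t → Mstep t t' → ∃ m < n, JtSolvN m t' := by
  intro n t t' hs h
  cases n with
  | zero => exact (hnfH_no_mstep hs h).elim
  | succ n =>
    rcases hs with hs | ⟨t'', h1, hs⟩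
    · exact (hnfH_no_mstep hs h).elim
    · rw [mstep_det h h1]
      exact ⟨n, by omega, hs⟩

theorem jtsolvN_rtg : ∀ {t t' : LamH}, Relation.ReflTransGen Mstep t t' → ∀ {n}, JtSolvN n t →
    ∃ m ≤ n, JtSolvN m t' := by
  intro t t' h
  induction h with
  | refl => intro n hs; exact ⟨n, le_refl n, hs⟩
  | tail hp h1 ih =>
    intro n hs
    obtain ⟨m, hm, hs'⟩ := ih hs
    obtain ⟨m', hm', hs''⟩ := jtsolvN_step hs' h1
    exact ⟨m', by omega, hs''⟩

theorem solvable_iff : ∀ t, Solvable t ↔ ∃ n, SolvN n t := by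
  intro t
  constructor
  · rintro ⟨t', hp, hh⟩
    induction hp using Relation.ReflTransGen.head_induction_on with
    | refl => exact ⟨0, hh⟩
    | head h1 hp ih =>
      obtain ⟨n, hn⟩ := ih
      exact ⟨n+1, Or.inr ⟨_, h1, hn⟩⟩
  · rintro ⟨n, hn⟩
    induction n generalizing t with
    | zero => exact ⟨t, Relation.ReflTransGen.refl, hn⟩
    | succ n ih =>
      rcases hn with h | ⟨t', h1, hs⟩
      · exact ⟨t, Relation.ReflTransGen.refl, h⟩
      · obtain ⟨t'', hp, hh⟩ := ih t' hs
        exact ⟨t'', Relation.ReflTransGen.head h1 hp, hh⟩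

theorem jtsolvable_iff : ∀ t, JtSolvable t ↔ ∃ n, JtSolvN n t := by
  intro t
  constructor
  · rintro ⟨t', hp, hh⟩
    induction hp using Relation.ReflTransGen.head_induction_on with
    | refl => exact ⟨0, hh⟩
    | head h1 hp ih =>
      obtain ⟨n, hn⟩ := ih
      exact ⟨n+1, Or.inr ⟨_, h1, hn⟩⟩
  · rintro ⟨n, hn⟩
    induction n generalizing t with
    | zero => exact ⟨t, Relation.ReflTransGen.refl, hn⟩
    | succ n ih =>
      rcases hn with h | ⟨t', h1, hs⟩
      · exact ⟨t, Relation.ReflTransGen.refl, h⟩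
      · obtain ⟨t'', hp, hh⟩ := ih t' hs
        exact ⟨t'', Relation.ReflTransGen.head h1 hp, hh⟩

theorem solvable_head {a b : LamH} (h : Head a b) (hs : Solvable b) : Solvable a := by
  obtain ⟨t, hp, hh⟩ := hs
  exact ⟨t, Relation.ReflTransGen.head h hp, hh⟩

theorem solvable_rtg {a b : LamH} (h : Relation.ReflTransGen Head a b) (hs : Solvable b) :
    Solvable a := by
  obtain ⟨t, hp, hh⟩ := hs
  exact ⟨t, Relation.ReflTransGen.trans h hp, hh⟩

theorem solvable_tg {a b : LamH} (h : Relation.TransGen Head a b) (hs : Solvable b) : Solvable a :=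
  solvable_rtg h.to_reflTransGen hs

theorem solvable_lam {a : LamH} (h : Solvable a) : Solvable (lam a) := by
  obtain ⟨t, hp, hh⟩ := h
  exact ⟨lam t, rtg_abs hp, Hnf.lam hh⟩

theorem hnf_lam_inv {B : LamH} (h : Hnf (lam B)) : Hnf B := by
  cases h with
  | base hv => cases hv
  | lam h => exact h

theorem solvN_lam_inv : ∀ {n : ℕ} {B : LamH}, SolvN n (lam B) → ∃ m ≤ n, SolvN m B := by
  intro n
  induction n with
  | zero => intro B h; exact ⟨0, le_refl 0, hnf_lam_inv h⟩
  | succ n ih =>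
    intro B h
    rcases h with h | ⟨t', h1, hs⟩
    · exact ⟨0, by omega, hnf_lam_inv h⟩
    · cases h1 with
      | abs h2 =>
        obtain ⟨m, hm, hs'⟩ := ih hs
        exact ⟨m+1, by omega, Or.inr ⟨_, h2, hs'⟩⟩

/-! ### Solvability of shells applied to spines -/

def apps : LamH → List LamH → LamH
  | t, [] => t
  | t, a :: l => apps (app t a) l

theorem varapp_apps : ∀ (sp : List LamH) {t : LamH}, VarApp t → VarApp (apps t sp) := by
  intro sp
  induction sp with
  | nil => intro t h; exact h
  | cons a l ih => intro t h; exact ih (VarApp.app a h)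

theorem varapp_lift : ∀ {t : LamH}, VarApp t → ∀ d, VarApp (lift t d) := by
  intro t h
  induction h with
  | var n => intro d; simp only [lift]; split_ifs <;> exact VarApp.var _
  | app v h ih => intro d; exact VarApp.app _ (ih d)

def liftMany : LamH → List ℕ → LamH
  | t, [] => t
  | t, d :: ds => liftMany (lift t d) ds

theorem liftMany_app : ∀ (ds : List ℕ) (u v : LamH),
    liftMany (app u v) ds = app (liftMany u ds) (liftMany v ds) := by
  intro ds
  induction ds with
  | nil => intros; rfl
  | cons d ds ih => intro u v; exact ih (lift u d) (lift v d)

theorem liftMany_J : ∀ ds, liftMany Jterm ds = Jterm := by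
  intro ds
  induction ds with
  | nil => rfl
  | cons d ds ih => show liftMany (lift Jterm d) ds = Jterm; rw [lift_J]; exact ih

theorem liftMany_var : ∀ (ds : List ℕ) (n : ℕ), ∃ m, liftMany (var n) ds = var m := by
  intro ds
  induction ds with
  | nil => intro n; exact ⟨n, rfl⟩
  | cons d ds ih =>
    intro n
    show ∃ m, liftMany (lift (var n) d) ds = var m
    by_cases h : n < d
    · rw [show lift (var n) d = var n from by simp [lift, h]]
      exact ih n
    · rw [show lift (var n) d = var (n+1) from by simp [lift, h]]
      exact ih (n+1)

theorem liftMany_append0 : ∀ (ds : List ℕ) (t : LamH),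
    liftMany t (ds ++ [0]) = lift (liftMany t ds) 0 := by
  intro ds
  induction ds with
  | nil => intro t; rfl
  | cons d ds ih => intro t; exact ih (lift t d)

theorem liftMany_wrapform : ∀ (ds : List ℕ) (X A : LamH), ClosedAbove A 1 →
    liftMany (lam (app (lift X 0) A)) ds = lam (app (lift (liftMany X ds) 0) A) := by
  intro ds
  induction ds with
  | nil => intros; rfl
  | cons d ds ih =>
    intro X A hA
    show liftMany (lift (lam (app (lift X 0) A)) d) ds = _
    rw [lift_lam', lift_app, lift_lift X 0 d (by omega), ca_lift A 1 (d+1) hA (by omega)]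
    exact ih (lift X d) A hA

theorem tgA_spine : ∀ (sp : List LamH) {a b : LamH}, Relation.TransGen HeadA a b →
    Relation.TransGen HeadA (apps a sp) (apps b sp) := by
  intro sp
  induction sp with
  | nil => intro a b h; exact h
  | cons x l ih => intro a b h; exact ih (tgA_appL x h)

theorem shgen : ∀ {M A : LamH}, Sim M A → (∃ k, M = var k) →
    ∀ (ds : List ℕ) (sp : List LamH),
    ∃ T, Relation.ReflTransGen Head (apps (liftMany A ds) sp) T ∧ Hnf T := by
  intro M A h
  induction h with
  | var n =>
    intro _ ds sp
    obtain ⟨m, hm⟩ := liftMany_var ds n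
    rw [hm]
    exact ⟨_, Relation.ReflTransGen.refl, Hnf.base (varapp_apps sp (VarApp.var m))⟩
  | H => rintro ⟨k, hk⟩; cases hk
  | lam _ _ => rintro ⟨k, hk⟩; cases hk
  | app _ _ _ _ => rintro ⟨k, hk⟩; cases hk
  | @guard M N₀ h1 ih =>
    intro hM ds sp
    rw [liftMany_app, liftMany_J]
    cases sp with
    | nil =>
      obtain ⟨T, hT, hh⟩ := ih hM (ds ++ [0]) [Jv]
      rw [liftMany_append0] at hT
      refine ⟨lam T, ?_, Hnf.lam hh⟩
      exact Relation.ReflTransGen.trans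
        (tgA_head (jred_sim_one (liftMany N₀ ds))).to_reflTransGen (rtg_abs hT)
    | cons s sp' =>
      obtain ⟨T, hT, hh⟩ := ih hM ds ((app Jterm s) :: sp')
      refine ⟨T, ?_, hh⟩
      have c1 := tgA_appL s (jred_sim_one (liftMany N₀ ds))
      have hb := Head.beta (app (lift (liftMany N₀ ds) 0) Jv) s
      rw [key_subst_Jv] at hb
      have c2 := c1.trans (Relation.TransGen.single
        (⟨hb, fun w hw => by cases hw⟩ : HeadA _ _))
      exact Relation.ReflTransGen.trans (tgA_head (tgA_spine sp' c2)).to_reflTransGen hT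
  | @wrap M N₀ A1 h1 hA1 ih ihA =>
    intro hM ds sp
    rw [liftMany_wrapform ds N₀ A1 (ca_of_simvar hA1)]
    cases sp with
    | nil =>
      obtain ⟨T, hT, hh⟩ := ih hM (ds ++ [0]) [A1]
      rw [liftMany_append0] at hT
      exact ⟨lam T, rtg_abs hT, Hnf.lam hh⟩
    | cons s sp' =>
      obtain ⟨T, hT, hh⟩ := ih hM ds ((subst A1 0 s) :: sp')
      refine ⟨T, ?_, hh⟩
      have c3 := tgA_spine sp' (Relation.TransGen.single (headA_wrapbeta (liftMany N₀ ds) A1 s))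
      exact Relation.ReflTransGen.trans (tgA_head c3).to_reflTransGen hT

theorem varapp_subst_strong : ∀ {X : LamH}, VarApp X → ∀ (k : ℕ) (A : LamH), Sim (var k) A →
    ∀ (sp : List LamH),
    ∃ T, Relation.ReflTransGen Head (apps (subst (lift X (k+1)) k A) sp) T ∧ Hnf T := by
  intro X hX
  induction hX with
  | var n =>
    intro k A hA sp
    by_cases h : n = k
    · subst h
      rw [show subst (lift (var n) (n+1)) n A = A from by
        simp only [lift]; rw [if_pos (by omega)]; exact subst_var_self n A]
      exact shgen hA ⟨n, rfl⟩ [] sp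
    · have hv : ∃ m, subst (lift (var n) (k+1)) k A = var m := by
        simp only [lift]
        split_ifs with h1
        · exact ⟨n, by simp only [subst]; rw [if_neg h, if_neg (by omega)]⟩
        · refine ⟨n, ?_⟩
          simp only [subst]
          rw [if_neg (by omega), if_pos (by omega)]
          exact congrArg LamH.var (by omega)
      obtain ⟨m, hm⟩ := hv
      rw [hm]
      exact ⟨_, Relation.ReflTransGen.refl, Hnf.base (varapp_apps sp (VarApp.var m))⟩
  | @app u v hu ih =>
    intro k A hA sp
    exact ih k A hA ((subst (lift v (k+1)) k A) :: sp)

theorem hnf_subst_solv : ∀ {X : LamH}, Hnf X → ∀ (k : ℕ) (A : LamH), Sim (var k) A →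
    Solvable (subst (lift X (k+1)) k A) := by
  intro X hX
  induction hX with
  | base hv =>
    intro k A hA
    obtain ⟨T, hT, hh⟩ := varapp_subst_strong hv k A hA []
    exact ⟨T, hT, hh⟩
  | @lam B hB ih =>
    intro k A hA
    have hA' : Sim (var (k+1)) (lift A 0) := by
      have := sim_lift hA 0
      rwa [show lift (var k) 0 = var (k+1) from by simp [lift]] at this
    exact solvable_lam (ih (k+1) (lift A 0) hA')

theorem subst_solv : ∀ (n : ℕ) (X : LamH), SolvN n X → ∀ (k : ℕ) (A : LamH), Sim (var k) A →
    Solvable (subst (lift X (k+1)) k A) := by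
  intro n
  induction n with
  | zero => intro X hX k A hA; exact hnf_subst_solv hX k A hA
  | succ n ih =>
    intro X hX k A hA
    rcases hX with h | ⟨X', hst, hX'⟩
    · exact hnf_subst_solv h k A hA
    · exact solvable_head (head_subst (head_lift hst (k+1)) k A) (ih X' hX' k A hA)

theorem solv_wrap_hnf : ∀ {B : LamH}, Hnf B → ∀ A, Sim (var 0) A →
    Solvable (lam (app (lift B 0) A)) := by
  intro B hB A hA
  cases hB with
  | base hv =>
    exact ⟨lam (app (lift B 0) A), Relation.ReflTransGen.refl,
      Hnf.lam (Hnf.base (VarApp.app A (varapp_lift hv 0)))⟩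
  | @lam B₀ hB₀ =>
    refine solvable_head (Head.abs (Head.beta (lift B₀ 1) A)) ?_
    exact solvable_lam (hnf_subst_solv hB₀ 0 A hA)

theorem solv_wrap : ∀ (n : ℕ) (B : LamH), SolvN n B → ∀ A, Sim (var 0) A →
    Solvable (lam (app (lift B 0) A)) := by
  intro n
  induction n with
  | zero => intro B hB A hA; exact solv_wrap_hnf hB A hA
  | succ n ih =>
    intro B hB A hA
    rcases hB with hB | ⟨B', h1, hs⟩
    · exact solv_wrap_hnf hB A hA
    · rcases lam_or_not B with ⟨B₀, rfl⟩ | hnl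
      · have hsB : SolvN (n+1) (lam B₀) := Or.inr ⟨B', h1, hs⟩
        obtain ⟨m, hm, hs0⟩ := solvN_lam_inv hsB
        refine solvable_head (Head.abs (Head.beta (lift B₀ 1) A)) ?_
        exact solvable_lam (subst_solv m B₀ hs0 0 A hA)
      · refine solvable_head (Head.abs (Head.appL A (head_lift h1 0) (lift_ne_lam hnl 0))) ?_
        exact ih B' hs A hA

/-! ### Robustly head-variable terms -/

inductive VG : LamH → Prop
  | va {t : LamH} : VarApp t → VG t
  | wr {B A : LamH} : VG B → Sim (var 0) A → VG (lam (app (lift B 0) A))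
  | red {a b : LamH} : Head a b → (∀ w, a ≠ lam w) → VG b → VG a

theorem vg_app : ∀ {t : LamH}, VG t → ∀ s, VG (app t s) := by
  intro t h
  induction h with
  | va hv => intro s; exact VG.va (VarApp.app s hv)
  | @wr B A hB hA ih =>
    intro s
    refine VG.red ?_ (fun w hw => by cases hw) (ih (subst A 0 s))
    have hb := Head.beta (app (lift B 0) A) s
    rw [key_subst] at hb
    exact hb
  | red h1 hnl hb ih =>
    intro s
    exact VG.red (Head.appL s h1 hnl) (fun w hw => by cases hw) (ih s)

theorem vg_tgA : ∀ {a b : LamH}, Relation.TransGen HeadA a b → VG b → VG a := by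
  intro a b h
  induction h with
  | single h1 => intro hb; exact VG.red h1.1 h1.2 hb
  | tail hp h1 ih => intro hb; exact ih (VG.red h1.1 h1.2 hb)

theorem vg_solvable : ∀ {t : LamH}, VG t → Solvable t := by
  intro t h
  induction h with
  | @va t hv => exact ⟨t, Relation.ReflTransGen.refl, Hnf.base hv⟩
  | @wr B A hB hA ih =>
    obtain ⟨n, hn⟩ := (solvable_iff B).mp ih
    exact solv_wrap n B hn A hA
  | red h1 hnl hb ih => exact solvable_head h1 ih

theorem vaz : ∀ {M N : LamH}, Sim M N → VarApp M → VG N := by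
  intro M N h
  induction h with
  | var n => intro _; exact VG.va (VarApp.var n)
  | H => intro hv; cases hv
  | lam _ _ => intro hv; cases hv
  | app h1 h2 ih1 ih2 =>
    intro hv
    cases hv with
    | app v hv' => exact vg_app (ih1 hv') _
  | @guard M N₀ h1 ih =>
    intro hv
    exact vg_tgA (jred_sim_one N₀) (VG.wr (ih hv) simvar_Jv)
  | @wrap M N₀ A h1 hA ih ihA =>
    intro hv
    exact VG.wr (ih hv) hA

theorem hnfH_lam_inv {M₀ : LamH} (h : HnfH (lam M₀)) : HnfH M₀ := by
  cases h with
  | base hv => cases hv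
  | lam h => exact h

theorem zlem : ∀ {M N : LamH}, Sim M N → HnfH M → Solvable N := by
  intro M N h
  induction h with
  | var n => intro _; exact ⟨var n, Relation.ReflTransGen.refl, Hnf.base (VarApp.var n)⟩
  | H =>
    intro _
    refine ⟨GJ, ?_, ?_⟩
    · refine Relation.ReflTransGen.head
        (Head.appL Gterm step_theta (fun w hw => by simp [thetaTerm] at hw)) ?_
      exact Relation.ReflTransGen.head step_R1G (Relation.ReflTransGen.single step_GJ)
    · exact Hnf.lam (Hnf.lam (Hnf.base (VarApp.app _ (VarApp.var 1))))
  | lam h1 ih =>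
    intro hh
    exact solvable_lam (ih (hnfH_lam_inv hh))
  | @app Ma Na Mb Nb h1 h2 ih1 ih2 =>
    intro hh
    have hv : VarApp (app Ma Mb) := by
      cases hh with
      | base hv => exact hv
    exact vg_solvable (vaz (Sim.app h1 h2) hv)
  | @guard M N₀ h1 ih =>
    intro hh
    refine solvable_tg (tgA_head (jred_sim_one N₀)) ?_
    obtain ⟨n, hn⟩ := (solvable_iff N₀).mp (ih hh)
    exact solv_wrap n N₀ hn Jv simvar_Jv
  | @wrap M N₀ A h1 hA ih ihA =>
    intro hh
    obtain ⟨n, hn⟩ := (solvable_iff N₀).mp (ih hh)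
    exact solv_wrap n N₀ hn A hA

/-! ### Main theorem -/

theorem sim_substH : ∀ M : LamH, Sim M (substH M Jterm) := by
  intro M
  induction M with
  | var n => exact Sim.var n
  | H => exact Sim.H
  | lam u ih => exact Sim.lam ih
  | app u v ihu ihv => exact Sim.app ihu ihv

theorem forward : ∀ n M, JtSolvN n M → ∀ N, Sim M N → Solvable N := by
  intro n
  induction n using Nat.strong_induction_on with
  | _ n ih =>
    intro M hM N hS
    cases n with
    | zero => exact zlem hS hM
    | succ n =>
      rcases hM with hh | ⟨M₁, hstep, hM'⟩
      · exact zlem hS hh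
      · obtain ⟨Mf, T, hch, hT, hSf, _⟩ := fsim hS M₁ hstep
        obtain ⟨m, hm, hMf⟩ := jtsolvN_rtg
          (Relation.ReflTransGen.mono (fun _ _ h => Or.inr h) _ _ hch) hM'
        exact solvable_tg hT (ih m (by omega) Mf hMf T hSf)

theorem backward : ∀ n N, SolvN n N → ∀ M, Sim M N → JtSolvable M := by
  intro n
  induction n using Nat.strong_induction_on with
  | _ n ih =>
    intro N hN M hS
    rcases tot M with hh | ⟨M₁, hstep⟩
    · exact ⟨M, Relation.ReflTransGen.refl, hh⟩
    · obtain ⟨Mf, T, hch, hT, hSf, _⟩ := fsim hS M₁ hstep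
      obtain ⟨m, hm, hTm⟩ := solvN_tg hT hN
      obtain ⟨Mz, hp, hz⟩ := ih m hm T hTm Mf hSf
      refine ⟨Mz, Relation.ReflTransGen.head hstep ?_, hz⟩
      exact Relation.ReflTransGen.trans
        (Relation.ReflTransGen.mono (fun _ _ h => Or.inr h) _ _ hch) hp

/-- `U` is J-t-solvable iff `U[J/H]` is solvable. -/
theorem JtSolvable_iff_substH_J_solvable (U : LamH) :
    JtSolvable U ↔ Solvable (substH U Jterm) := by
  constructor
  · intro h
    obtain ⟨n, hn⟩ := (jtsolvable_iff U).mp h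
    exact forward n U hn _ (sim_substH U)
  · intro h
    obtain ⟨n, hn⟩ := (solvable_iff _).mp h
    exact backward n _ hn U (sim_substH U)

end LamH
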